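/- Fix θ ∈ (0,1] and a, b > 0 with a + b ≥ 1, and let f(s) = 1 − ρ(s)(1−s) where ρ(s) = (a + b(1−s)^θ)^{−1/θ} for s ∈ [0,1). Define coefficients c_{n,i} for n ≥ 2, 0 ≤ i ≤ n by c_{2,1} = 1+θ, c_{n,0} = c_{n,n} = 0 for all n ≥ 2, and c_{n,i} = (n−2−iθ)·c_{n−1,i} + (1+iθ)·c_{n−1,i−1} for n ≥ 3 and 1 ≤ i ≤ n−1. Then for every n ≥ 2 and s ∈ [0,1), the n-th derivative of f satisfies f^{(n)}(s) = ∑_{i=1}^{n−1} a·b^i·c_{n,i}·ρ(s)^{(i+1)θ+1}·(1−s)^{iθ−n+1}. -/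

import Mathlib

open Real Set Finset Filter

section aux
variable {θ a b : ℝ}

private lemma upos (hθ : 0 < θ) (ha : 0 < a) (hb : 0 < b) {x : ℝ} (hx : x < 1) :
    0 < a + b * (1 - x) ^ θ := by
  have h : 0 < (1 - x) ^ θ := Real.rpow_pos_of_pos (by linarith) θ
  positivity

private lemma rho_pos (hθ : 0 < θ) (ha : 0 < a) (hb : 0 < b) {x : ℝ} (hx : x < 1) :
    0 < (a + b * (1 - x) ^ θ) ^ (-1/θ) :=
  Real.rpow_pos_of_pos (upos hθ ha hb hx) _

private lemma hasDerivAt_rho (hθ : 0 < θ) (ha : 0 < a) (hb : 0 < b) {x : ℝ} (hx : x < 1) :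
    HasDerivAt (fun y => (a + b * (1 - y) ^ θ) ^ (-1/θ))
      (b * ((a + b * (1 - x) ^ θ) ^ (-1/θ)) ^ (θ + 1) * (1 - x) ^ (θ - 1)) x := by
  have h1x : (0:ℝ) < 1 - x := by linarith
  have h1 : HasDerivAt (fun y : ℝ => 1 - y) (-1) x := by
    simpa using (hasDerivAt_id x).const_sub 1
  have h2 : HasDerivAt (fun y : ℝ => (1 - y) ^ θ) (-1 * θ * (1 - x) ^ (θ - 1)) x :=
    h1.rpow_const (Or.inl h1x.ne')
  have hu : HasDerivAt (fun y => a + b * (1 - y) ^ θ)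
      (b * (-1 * θ * (1 - x) ^ (θ - 1))) x := (h2.const_mul b).const_add a
  have hρ := hu.rpow_const (p := -1/θ) (Or.inl (upos hθ ha hb hx).ne')
  convert hρ using 1
  have hmul : ((a + b * (1 - x) ^ θ) ^ (-1/θ)) ^ (θ + 1)
      = (a + b * (1 - x) ^ θ) ^ (-1/θ - 1) := by
    rw [← Real.rpow_mul (upos hθ ha hb hx).le]
    congr 1
    field_simp
    ring
  rw [hmul]
  field_simp

private lemma hasDerivAt_term (hθ : 0 < θ) (ha : 0 < a) (hb : 0 < b) {x : ℝ} (hx : x < 1)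
    (p q : ℝ) :
    HasDerivAt (fun y => ((a + b * (1 - y) ^ θ) ^ (-1/θ)) ^ p * (1 - y) ^ q)
      (p * b * ((a + b * (1 - x) ^ θ) ^ (-1/θ)) ^ (p + θ) * (1 - x) ^ (q + θ - 1)
        - q * ((a + b * (1 - x) ^ θ) ^ (-1/θ)) ^ p * (1 - x) ^ (q - 1)) x := by
  have h1x : (0:ℝ) < 1 - x := by linarith
  have hρp := rho_pos hθ ha hb hx
  have h1 : HasDerivAt (fun y : ℝ => 1 - y) (-1) x := by
    simpa using (hasDerivAt_id x).const_sub 1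
  have h2 : HasDerivAt (fun y : ℝ => (1 - y) ^ q) (-1 * q * (1 - x) ^ (q - 1)) x :=
    h1.rpow_const (Or.inl h1x.ne')
  have h3 := ((hasDerivAt_rho hθ ha hb hx).rpow_const (p := p) (Or.inl hρp.ne')).mul h2
  refine h3.congr_deriv ?_
  symm
  rw [show p + θ = (p - 1) + (θ + 1) by ring, Real.rpow_add hρp,
    show q + θ - 1 = (θ - 1) + q by ring, Real.rpow_add h1x]
  ring

private lemma hasDerivAt_f (hθ : 0 < θ) (ha : 0 < a) (hb : 0 < b) {x : ℝ} (hx : x < 1) :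
    HasDerivAt (fun y : ℝ => 1 - (a + b * (1 - y) ^ θ) ^ (-1/θ) * (1 - y))
      (a * ((a + b * (1 - x) ^ θ) ^ (-1/θ)) ^ (θ + 1)) x := by
  have h1x : (0:ℝ) < 1 - x := by linarith
  have hu := upos hθ ha hb hx
  have h1 : HasDerivAt (fun y : ℝ => 1 - y) (-1) x := by
    simpa using (hasDerivAt_id x).const_sub 1
  have h3 := ((hasDerivAt_rho hθ ha hb hx).mul h1).const_sub 1
  refine h3.congr_deriv ?_
  symm
  have hmul : ((a + b * (1 - x) ^ θ) ^ (-1/θ)) ^ (θ + 1)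
      = (a + b * (1 - x) ^ θ) ^ ((-1/θ) * (θ + 1)) := by
    rw [← Real.rpow_mul hu.le]
  have hsplit : (a + b * (1 - x) ^ θ) ^ (-1/θ)
      = (a + b * (1 - x) ^ θ) ^ ((-1/θ) * (θ + 1)) * (a + b * (1 - x) ^ θ) := by
    rw [← Real.rpow_add_one hu.ne']
    congr 1
    field_simp
    ring
  have hpow : (1 - x) ^ (θ - 1) * (1 - x) = (1 - x) ^ θ := by
    rw [← Real.rpow_add_one h1x.ne']
    ring_nf
  rw [hmul, hsplit]
  linear_combination (b * (a + b * (1 - x) ^ θ) ^ ((-1/θ) * (θ + 1))) * hpow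
end aux

theorem pf_iterated_deriv (θ a b : ℝ) (hθ : θ ∈ Set.Ioc (0:ℝ) 1) (ha : 0 < a) (hb : 0 < b)
    (hab : 1 ≤ a + b) (c : ℕ → ℕ → ℝ)
    (hc21 : c 2 1 = 1 + θ)
    (hc0 : ∀ n, 2 ≤ n → c n 0 = 0) (hcn : ∀ n, 2 ≤ n → c n n = 0)
    (hcrec : ∀ n i, 3 ≤ n → 1 ≤ i → i ≤ n - 1 →
      c n i = ((n : ℝ) - 2 - i * θ) * c (n - 1) i + (1 + i * θ) * c (n - 1) (i - 1)) :
    ∀ n : ℕ, 2 ≤ n → ∀ s ∈ Set.Ico (0:ℝ) 1,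
      iteratedDeriv n (fun x : ℝ => 1 - (a + b * (1 - x) ^ θ) ^ (-1/θ) * (1 - x)) s
        = ∑ i ∈ Finset.Icc 1 (n - 1),
            a * b ^ i * c n i * ((a + b * (1 - s) ^ θ) ^ (-1/θ)) ^ (((i : ℝ) + 1) * θ + 1)
              * (1 - s) ^ ((i : ℝ) * θ - n + 1) := by
  obtain ⟨hθ0, hθ1⟩ := hθ
  suffices H : ∀ n : ℕ, 2 ≤ n → ∀ s : ℝ, s < 1 →
      iteratedDeriv n (fun x : ℝ => 1 - (a + b * (1 - x) ^ θ) ^ (-1/θ) * (1 - x)) s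
        = ∑ i ∈ Finset.Icc 1 (n - 1),
            a * b ^ i * c n i * ((a + b * (1 - s) ^ θ) ^ (-1/θ)) ^ (((i : ℝ) + 1) * θ + 1)
              * (1 - s) ^ ((i : ℝ) * θ - n + 1) by
    exact fun n hn s hs => H n hn s hs.2
  intro n hn
  induction n, hn using Nat.le_induction with
  | base =>
    intro s hs
    have hρp := rho_pos hθ0 ha hb hs
    rw [iteratedDeriv_succ, iteratedDeriv_one]
    have hev : deriv (fun x : ℝ => 1 - (a + b * (1 - x) ^ θ) ^ (-1/θ) * (1 - x)) =ᶠ[nhds s]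
        (fun x : ℝ => a * ((a + b * (1 - x) ^ θ) ^ (-1/θ)) ^ (θ + 1)) :=
      eventuallyEq_of_mem (isOpen_Iio.mem_nhds hs)
        (fun y hy => (hasDerivAt_f hθ0 ha hb hy).deriv)
    rw [hev.deriv_eq]
    have h := ((hasDerivAt_rho hθ0 ha hb hs).rpow_const (p := θ + 1)
      (Or.inl hρp.ne')).const_mul a
    rw [h.deriv]
    rw [show (2:ℕ) - 1 = 1 from rfl, Finset.Icc_self, Finset.sum_singleton]
    have hX : ((a + b * (1 - s) ^ θ) ^ (-1/θ)) ^ ((θ + 1) + θ)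
        = ((a + b * (1 - s) ^ θ) ^ (-1/θ)) ^ (θ + 1) * ((a + b * (1 - s) ^ θ) ^ (-1/θ)) ^ θ :=
      Real.rpow_add hρp _ _
    rw [hc21, pow_one, Nat.cast_one, show θ + 1 - 1 = θ by ring,
      show ((1:ℝ) + 1) * θ + 1 = (θ + 1) + θ by ring,
      show (1:ℝ) * θ - ((2:ℕ):ℝ) + 1 = θ - 1 by push_cast; ring]
    set P1 := ((a + b * (1 - s) ^ θ) ^ (-1/θ)) ^ (θ + 1) with hP1
    set P2 := ((a + b * (1 - s) ^ θ) ^ (-1/θ)) ^ θ with hP2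
    set P3 := ((a + b * (1 - s) ^ θ) ^ (-1/θ)) ^ ((θ + 1) + θ) with hP3
    set Y := (1 - s) ^ (θ - 1) with hY
    linear_combination (-(a * b * (1 + θ) * Y)) * hX
  | succ n hn IH =>
    intro s hs
    have hρp := rho_pos hθ0 ha hb hs
    set ρ : ℝ := (a + b * (1 - s) ^ θ) ^ (-1/θ) with hρdef
    rw [iteratedDeriv_succ]
    have hev : iteratedDeriv n (fun x : ℝ => 1 - (a + b * (1 - x) ^ θ) ^ (-1/θ) * (1 - x))
        =ᶠ[nhds s] (fun x : ℝ => ∑ i ∈ Finset.Icc 1 (n - 1),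
            a * b ^ i * c n i * ((a + b * (1 - x) ^ θ) ^ (-1/θ)) ^ (((i : ℝ) + 1) * θ + 1)
              * (1 - x) ^ ((i : ℝ) * θ - n + 1)) :=
      eventuallyEq_of_mem (isOpen_Iio.mem_nhds hs) (fun y hy => IH y hy)
    rw [hev.deriv_eq]
    have hF : HasDerivAt (fun x : ℝ => ∑ i ∈ Finset.Icc 1 (n - 1),
        a * b ^ i * c n i * ((a + b * (1 - x) ^ θ) ^ (-1/θ)) ^ (((i : ℝ) + 1) * θ + 1)
          * (1 - x) ^ ((i : ℝ) * θ - n + 1))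
        (∑ i ∈ Finset.Icc 1 (n - 1), a * b ^ i * c n i *
          ((((i : ℝ) + 1) * θ + 1) * b * ρ ^ ((((i : ℝ) + 1) * θ + 1) + θ)
              * (1 - s) ^ (((i : ℝ) * θ - n + 1) + θ - 1)
            - ((i : ℝ) * θ - n + 1) * ρ ^ (((i : ℝ) + 1) * θ + 1)
              * (1 - s) ^ (((i : ℝ) * θ - n + 1) - 1))) s := by
      apply HasDerivAt.fun_sum
      intro i hi
      have h := (hasDerivAt_term hθ0 ha hb hs (((i : ℝ) + 1) * θ + 1)
        ((i : ℝ) * θ - n + 1)).const_mul (a * b ^ i * c n i)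
      simpa [mul_assoc] using h
    rw [hF.deriv]
    -- now pure algebra
    simp only [Nat.add_sub_cancel]
    have key : ∀ j ∈ Finset.Icc 1 n,
        a * b ^ j * c (n+1) j * ρ ^ (((j : ℝ) + 1) * θ + 1) * (1 - s) ^ ((j : ℝ) * θ - (n+1 : ℕ) + 1)
          = (a * b ^ j * (((n : ℝ) - 1) - (j : ℝ) * θ) * c n j * ρ ^ (((j : ℝ) + 1) * θ + 1)
              * (1 - s) ^ ((j : ℝ) * θ - (n+1 : ℕ) + 1))
            + (a * b ^ j * (1 + (j : ℝ) * θ) * c n (j - 1) * ρ ^ (((j : ℝ) + 1) * θ + 1)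
              * (1 - s) ^ ((j : ℝ) * θ - (n+1 : ℕ) + 1)) := by
      intro j hj
      rw [Finset.mem_Icc] at hj
      have hrec := hcrec (n+1) j (by omega) hj.1 (by omega)
      simp only [Nat.add_sub_cancel] at hrec
      rw [hrec]
      push_cast
      ring
    rw [Finset.sum_congr rfl key, Finset.sum_add_distrib]
    have hA : ∑ j ∈ Finset.Icc 1 n, (a * b ^ j * (((n : ℝ) - 1) - (j : ℝ) * θ) * c n j
          * ρ ^ (((j : ℝ) + 1) * θ + 1) * (1 - s) ^ ((j : ℝ) * θ - (n+1 : ℕ) + 1))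
        = ∑ j ∈ Finset.Icc 1 (n - 1), (a * b ^ j * (((n : ℝ) - 1) - (j : ℝ) * θ) * c n j
          * ρ ^ (((j : ℝ) + 1) * θ + 1) * (1 - s) ^ ((j : ℝ) * θ - (n+1 : ℕ) + 1)) := by
      refine (Finset.sum_subset (Finset.Icc_subset_Icc_right (Nat.sub_le n 1)) ?_).symm
      intro k hk hk'
      rw [Finset.mem_Icc] at hk hk'
      have hkn : k = n := by omega
      rw [hkn, hcn n hn]
      ring
    have hB : ∑ j ∈ Finset.Icc 1 n, (a * b ^ j * (1 + (j : ℝ) * θ) * c n (j - 1)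
          * ρ ^ (((j : ℝ) + 1) * θ + 1) * (1 - s) ^ ((j : ℝ) * θ - (n+1 : ℕ) + 1))
        = ∑ i ∈ Finset.Icc 1 (n - 1), (a * b ^ (i+1) * (1 + ((i+1 : ℕ) : ℝ) * θ) * c n ((i+1) - 1)
          * ρ ^ ((((i+1 : ℕ) : ℝ) + 1) * θ + 1) * (1 - s) ^ (((i+1 : ℕ) : ℝ) * θ - (n+1 : ℕ) + 1)) := by
      rw [show ∑ j ∈ Finset.Icc 1 n, (a * b ^ j * (1 + (j : ℝ) * θ) * c n (j - 1)
          * ρ ^ (((j : ℝ) + 1) * θ + 1) * (1 - s) ^ ((j : ℝ) * θ - (n+1 : ℕ) + 1))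
        = ∑ j ∈ Finset.Icc 2 n, (a * b ^ j * (1 + (j : ℝ) * θ) * c n (j - 1)
          * ρ ^ (((j : ℝ) + 1) * θ + 1) * (1 - s) ^ ((j : ℝ) * θ - (n+1 : ℕ) + 1)) from
        (Finset.sum_subset (Finset.Icc_subset_Icc_left (by omega)) (by
          intro k hk hk'
          rw [Finset.mem_Icc] at hk hk'
          have hk1 : k = 1 := by omega
          rw [hk1, show (1:ℕ) - 1 = 0 from rfl, hc0 n hn]
          ring)).symm]
      rw [show Finset.Icc 2 n = Finset.map (addRightEmbedding 1) (Finset.Icc 1 (n-1)) by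
        rw [Finset.map_add_right_Icc]
        congr 1
        omega]
      rw [Finset.sum_map]
      rfl
    rw [hA, hB, ← Finset.sum_add_distrib]
    apply Finset.sum_congr rfl
    intro i hi
    rw [Finset.mem_Icc] at hi
    rw [show (i+1) - 1 = i from rfl]
    rw [show ((((i : ℝ) + 1) * θ + 1) + θ) = ((((i+1 : ℕ) : ℝ)) + 1) * θ + 1 by push_cast; ring,
      show (((i : ℝ) * θ - n + 1) + θ - 1) = ((i+1 : ℕ) : ℝ) * θ - ((n+1 : ℕ) : ℝ) + 1 by push_cast; ring,
      show (((i : ℝ) * θ - n + 1) - 1) = (i : ℝ) * θ - ((n+1 : ℕ) : ℝ) + 1 by push_cast; ring]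
    push_cast
    ring
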